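/- Let w be a weight structure on a triangulated category C. Then C_{w≥0} = (C_{w≤-1})^⊥ and C_{w≤0} = ^⊥(C_{w≥1}). -/

import Mathlib

open CategoryTheory CategoryTheory.Limits CategoryTheory.Pretriangulated ZeroObject

universe w' v u

variable (C : Type u) [Category.{v} C] [HasZeroObject C] [HasShift C ℤ]
  [Preadditive C] [∀ n : ℤ, (shiftFunctor C n).Additive] [Pretriangulated C]

/-- A t-structure `t = (C_{t≤0}, C_{t≥0})` on a triangulated category, in the homological
convention of the paper.  `le` is the class `C_{t≤0}` and `ge` is the class `C_{t≥0}`.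
The condition `C_{t≤0} ⊆ C_{t≤0}[1]` is encoded as `le X → le (X⟦-1⟧)` (the classes being
closed under isomorphism), and `C_{t≥0}[1] ⊆ C_{t≥0}` as `ge X → ge (X⟦1⟧)`.
The class `C_{t≤i} = C_{t≤0}[i]` is `fun X => le (X⟦-i⟧)` and similarly for `C_{t≥i}`. -/
structure PaperTStructure where
  /-- the class `C_{t≤0}` -/
  le : C → Prop
  /-- the class `C_{t≥0}` -/
  ge : C → Prop
  le_iso : ∀ {X Y : C}, (X ≅ Y) → le X → le Y
  ge_iso : ∀ {X Y : C}, (X ≅ Y) → ge X → ge Y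
  le_shift : ∀ X : C, le X → le (X⟦(-1 : ℤ)⟧)
  ge_shift : ∀ X : C, ge X → ge (X⟦(1 : ℤ)⟧)
  /-- `C_{t≥0}[1] ⊥ C_{t≤0}` -/
  orth : ∀ (X Y : C), ge X → le Y → ∀ f : X⟦(1 : ℤ)⟧ ⟶ Y, f = 0
  /-- every object `M` admits a `t`-decomposition `L → M → R → L[1]` with `L ∈ C_{t≥0}`,
  `R ∈ C_{t≤0}[-1]` (i.e. `R⟦1⟧ ∈ C_{t≤0}`) -/
  decomp : ∀ M : C, ∃ (L R : C) (f : L ⟶ M) (g : M ⟶ R) (h : R ⟶ L⟦(1 : ℤ)⟧),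
    (Triangle.mk f g h ∈ distTriang C) ∧ ge L ∧ le (R⟦(1 : ℤ)⟧)

/-- A weight structure `w = (C_{w≤0}, C_{w≥0})` on a triangulated category, in the homological
convention of the paper.  `le` is the class `C_{w≤0}` and `ge` is the class `C_{w≥0}`;
both are retraction-closed.  `C_{w≤i} = C_{w≤0}[i]` is `fun X => le (X⟦-i⟧)`, similarly `ge`. -/
structure PaperWeightStructure where
  /-- the class `C_{w≤0}` -/
  le : C → Prop
  /-- the class `C_{w≥0}` -/
  ge : C → Prop
  le_retract : ∀ (X Y : C), le Y → (∃ (i : X ⟶ Y) (r : Y ⟶ X), i ≫ r = 𝟙 X) → le X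
  ge_retract : ∀ (X Y : C), ge Y → (∃ (i : X ⟶ Y) (r : Y ⟶ X), i ≫ r = 𝟙 X) → ge X
  le_shift : ∀ X : C, le X → le (X⟦(-1 : ℤ)⟧)
  ge_shift : ∀ X : C, ge X → ge (X⟦(1 : ℤ)⟧)
  /-- `C_{w≤0} ⊥ C_{w≥0}[1]` -/
  orth : ∀ (X Y : C), le X → ge Y → ∀ f : X ⟶ Y⟦(1 : ℤ)⟧, f = 0
  /-- every object `M` admits a weight decomposition `L → M → R → L[1]` with `L ∈ C_{w≤0}`,
  `R ∈ C_{w≥0}[1]` (i.e. `R⟦-1⟧ ∈ C_{w≥0}`) -/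
  decomp : ∀ M : C, ∃ (L R : C) (f : L ⟶ M) (g : M ⟶ R) (h : R ⟶ L⟦(1 : ℤ)⟧),
    (Triangle.mk f g h ∈ distTriang C) ∧ le L ∧ ge (R⟦(-1 : ℤ)⟧)

/-- A class of objects is extension-closed if it contains `0` and for every distinguished
triangle `X → Y → Z → X[1]` with `X, Z` in the class, `Y` lies in the class. -/
def ExtClosed (P : C → Prop) : Prop :=
  P (0 : C) ∧ ∀ T : Triangle C, (T ∈ distTriang C) → P T.obj₁ → P T.obj₃ → P T.obj₂

/-- A class of objects is retraction-closed if it contains all retracts of its elements. -/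
def RetractClosed (P : C → Prop) : Prop :=
  ∀ X Y : C, P Y → (∃ (i : X ⟶ Y) (r : Y ⟶ X), i ≫ r = 𝟙 X) → P X

/-- for a weight structure `w`, `C_{w≥0} = (C_{w≤-1})^⊥` and
`C_{w≤0} = ^⊥(C_{w≥1})`.  Here `C_{w≤-1} = {X : X⟦1⟧ ∈ C_{w≤0}}` and
`C_{w≥1} = {Y : Y⟦-1⟧ ∈ C_{w≥0}}`. -/
theorem stmt1 (w : PaperWeightStructure C) :
    (∀ Y : C, w.ge Y ↔ ∀ X : C, w.le (X⟦(1 : ℤ)⟧) → ∀ f : X ⟶ Y, f = 0) ∧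
    (∀ X : C, w.le X ↔ ∀ Y : C, w.ge (Y⟦(-1 : ℤ)⟧) → ∀ f : X ⟶ Y, f = 0) := by
  constructor
  · intro Y
    constructor
    · intro hY X hX f
      have h0 : (shiftFunctor C (1 : ℤ)).map f = 0 := w.orth _ Y hX hY _
      exact (shiftFunctor C (1 : ℤ)).map_injective (by rw [h0, Functor.map_zero])
    · intro h
      obtain ⟨L, R, f, g, m, hTri, hL, hR⟩ := w.decomp (Y⟦(1 : ℤ)⟧)
      set T' := (Triangle.shiftFunctor C (-1)).obj (Triangle.mk f g m) with hT'def
      have hT' : T' ∈ distTriang C := Triangle.shift_distinguished _ hTri (-1)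
      have e₂ : (Y⟦(1 : ℤ)⟧)⟦(-1 : ℤ)⟧ ≅ Y := shiftShiftNeg Y 1
      have hL' : w.le ((L⟦(-1 : ℤ)⟧)⟦(1 : ℤ)⟧) := by
        have e : (L⟦(-1 : ℤ)⟧)⟦(1 : ℤ)⟧ ≅ L := shiftNegShift L 1
        exact w.le_retract _ _ hL ⟨e.hom, e.inv, e.hom_inv_id⟩
      have hm1 : T'.mor₁ = 0 := by
        have := h (L⟦(-1 : ℤ)⟧) hL' (T'.mor₁ ≫ e₂.hom)
        have := this
        exact (cancel_mono e₂.hom).1 (this.trans zero_comp.symm)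
      obtain ⟨r, hr⟩ := Triangle.yoneda_exact₂ T' hT' (𝟙 T'.obj₂)
        (by rw [hm1, zero_comp])
      have hge : w.ge T'.obj₂ := w.ge_retract _ _ hR ⟨T'.mor₂, r, hr.symm⟩
      exact w.ge_retract _ _ hge ⟨e₂.inv, e₂.hom, e₂.inv_hom_id⟩
  · intro X
    constructor
    · intro hX Y hY f
      have e : (Y⟦(-1 : ℤ)⟧)⟦(1 : ℤ)⟧ ≅ Y := shiftNegShift Y 1
      have h0 : f ≫ e.inv = 0 := w.orth X _ hX hY _
      calc f = (f ≫ e.inv) ≫ e.hom := by simp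
        _ = 0 := by rw [h0, zero_comp]
    · intro h
      obtain ⟨L, R, f, g, m, hTri, hL, hR⟩ := w.decomp X
      have hg : g = 0 := h R hR g
      obtain ⟨s, hs⟩ := Triangle.coyoneda_exact₂ _ hTri (𝟙 X)
        (by change 𝟙 X ≫ g = 0; rw [hg, comp_zero])
      exact w.le_retract _ _ hL ⟨s, f, hs.symm⟩
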